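/- For any two density operators ρ_1, ρ_2 on a finite-dimensional Hilbert space, half the trace distance is bounded by the hyperbolic tangent of a quarter of the Hilbert projective distance: (1/2)‖ρ_1 − ρ_2‖_1 ≤ tanh(h(ρ_1, ρ_2)/4). -/

import Mathlib

open Matrix BigOperators Kronecker ComplexOrder

noncomputable def trNorm {n : Type*} [Fintype n] [DecidableEq n] (M : Matrix n n ℂ) : ℝ :=
  (((Matrix.posSemidef_conjTranspose_mul_self M).1.eigenvectorUnitary.1 *
      Matrix.diagonal (((↑) : ℝ → ℂ) ∘ Real.sqrt ∘ (Matrix.posSemidef_conjTranspose_mul_self M).1.eigenvalues) *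
      (star (Matrix.posSemidef_conjTranspose_mul_self M).1.eigenvectorUnitary : Matrix n n ℂ)).trace).re

noncomputable def mlog {n : Type*} [Fintype n] [DecidableEq n] (M : Matrix n n ℂ) : Matrix n n ℂ :=
  if h : M.IsHermitian then
    (h.eigenvectorUnitary : Matrix n n ℂ) *
      Matrix.diagonal (fun i => (Real.log (h.eigenvalues i) : ℂ)) *
      (star (h.eigenvectorUnitary : Matrix n n ℂ))
  else 0

noncomputable def vnEnt {n : Type*} [Fintype n] [DecidableEq n] (ρ : Matrix n n ℂ) : ℝ :=
  -(((ρ * mlog ρ).trace).re)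

noncomputable def relEnt {n : Type*} [Fintype n] [DecidableEq n] (ρ σ : Matrix n n ℂ) : ℝ :=
  (((ρ * (mlog ρ - mlog σ)).trace).re)

def IsState {n : Type*} [Fintype n] (ρ : Matrix n n ℂ) : Prop := ρ.PosSemidef ∧ ρ.trace = 1

noncomputable def ptraceL {α n : Type*} [Fintype α] (M : Matrix (α × n) (α × n) ℂ) : Matrix n n ℂ :=
  Matrix.of fun i j => ∑ a, M (a, i) (a, j)

noncomputable def ptraceR {α n : Type*} [Fintype n] (M : Matrix (α × n) (α × n) ℂ) : Matrix α α ℂ :=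
  Matrix.of fun i j => ∑ c, M (i, c) (j, c)

noncomputable def amp {α γ δ : Type*} (Φ : Matrix γ γ ℂ → Matrix δ δ ℂ)
    (ρ : Matrix (α × γ) (α × γ) ℂ) : Matrix (α × δ) (α × δ) ℂ :=
  Matrix.of fun x y => Φ (Matrix.of fun c c' => ρ (x.1, c) (y.1, c')) x.2 y.2

def IsCP {γ δ : Type*} [Fintype γ] [Fintype δ] (Φ : Matrix γ γ ℂ → Matrix δ δ ℂ) : Prop :=
  IsLinearMap ℂ Φ ∧ ∀ (k : ℕ) (ρ : Matrix (Fin k × γ) (Fin k × γ) ℂ), ρ.PosSemidef → (amp Φ ρ).PosSemidef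

def IsTP {γ δ : Type*} [Fintype γ] [Fintype δ] (Φ : Matrix γ γ ℂ → Matrix δ δ ℂ) : Prop :=
  ∀ ρ, (Φ ρ).trace = ρ.trace

section tri
variable {α β γ : Type*} [Fintype α] [Fintype β] [Fintype γ]

noncomputable def mAB (ρ : Matrix ((α × β) × γ) ((α × β) × γ) ℂ) : Matrix (α × β) (α × β) ℂ := ptraceR ρ
noncomputable def mA (ρ : Matrix ((α × β) × γ) ((α × β) × γ) ℂ) : Matrix α α ℂ := ptraceR (mAB ρ)
noncomputable def mB (ρ : Matrix ((α × β) × γ) ((α × β) × γ) ℂ) : Matrix β β ℂ := ptraceL (mAB ρ)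
noncomputable def mBC (ρ : Matrix ((α × β) × γ) ((α × β) × γ) ℂ) : Matrix (β × γ) (β × γ) ℂ :=
  Matrix.of fun p q => ∑ a, ρ ((a, p.1), p.2) ((a, q.1), q.2)

noncomputable def cmi [DecidableEq α] [DecidableEq β] [DecidableEq γ]
    (ρ : Matrix ((α × β) × γ) ((α × β) × γ) ℂ) : ℝ :=
  vnEnt (mAB ρ) + vnEnt (mBC ρ) - vnEnt (mB ρ) - vnEnt ρ

noncomputable def prodA_BC (ρ : Matrix ((α × β) × γ) ((α × β) × γ) ℂ) :
    Matrix ((α × β) × γ) ((α × β) × γ) ℂ :=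
  Matrix.of fun x y => mA ρ x.1.1 y.1.1 * mBC ρ (x.1.2, x.2) (y.1.2, y.2)

noncomputable def prodA_B (ρ : Matrix ((α × β) × γ) ((α × β) × γ) ℂ) : Matrix (α × β) (α × β) ℂ :=
  Matrix.of fun x y => mA ρ x.1 y.1 * mB ρ x.2 y.2

noncomputable def tcmi [DecidableEq α] [DecidableEq β] [DecidableEq γ]
    (ρ : Matrix ((α × β) × γ) ((α × β) × γ) ℂ) : ℝ :=
  trNorm (ρ - prodA_BC ρ) - trNorm (mAB ρ - prodA_B ρ)
end tri

open scoped MatrixOrder in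
lemma trNorm_hermitian {n : Type*} [Fintype n] [DecidableEq n] (M : Matrix n n ℂ)
    (hM : M.IsHermitian) : trNorm M = ∑ i, |hM.eigenvalues i| := by
  set U : Matrix n n ℂ := (hM.eigenvectorUnitary : Matrix n n ℂ) with hU
  have hU2 : star U * U = 1 := Matrix.mem_unitaryGroup_iff'.mp hM.eigenvectorUnitary.2
  have cancel : ∀ X : Matrix n n ℂ, star U * (U * X) = X := fun X => by
    rw [← Matrix.mul_assoc, hU2, Matrix.one_mul]
  set D : Matrix n n ℂ := Matrix.diagonal (fun i => ((|hM.eigenvalues i| : ℝ) : ℂ)) with hD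
  set S : Matrix n n ℂ := U * D * star U with hS
  have hSpsd : S.PosSemidef := by
    apply Matrix.PosSemidef.mul_mul_conjTranspose_same (B := U)
    exact Matrix.posSemidef_diagonal_iff.mpr fun i => by
      rw [Complex.le_def]; simp [abs_nonneg]
  have hDD : D * D = Matrix.diagonal (RCLike.ofReal ∘ hM.eigenvalues) *
      Matrix.diagonal (RCLike.ofReal ∘ hM.eigenvalues) := by
    have hf : (fun i => ((|hM.eigenvalues i| : ℝ) : ℂ) * ((|hM.eigenvalues i| : ℝ) : ℂ))
        = fun i => (RCLike.ofReal ∘ hM.eigenvalues) i * (RCLike.ofReal ∘ hM.eigenvalues) i := by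
      funext i
      show ((|hM.eigenvalues i| : ℝ) : ℂ) * ((|hM.eigenvalues i| : ℝ) : ℂ)
        = ((hM.eigenvalues i : ℝ) : ℂ) * ((hM.eigenvalues i : ℝ) : ℂ)
      rw [← Complex.ofReal_mul, ← Complex.ofReal_mul, abs_mul_abs_self]
    rw [hD, Matrix.diagonal_mul_diagonal, Matrix.diagonal_mul_diagonal, hf]
  have hsq : S ^ 2 = Mᴴ * M := by
    have hMspec := hM.spectral_theorem
    rw [Unitary.conjStarAlgAut_apply, ← hU] at hMspec
    rw [pow_two, hS, hM.eq]
    conv_rhs => rw [hMspec]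
    simp only [Matrix.mul_assoc]
    simp only [cancel]
    simp only [← Matrix.mul_assoc]
    congr 1
    rw [Matrix.mul_assoc, Matrix.mul_assoc, hDD]
  have hsqrt : S = ((Matrix.posSemidef_conjTranspose_mul_self M).1.eigenvectorUnitary.1 *
      Matrix.diagonal (((↑) : ℝ → ℂ) ∘ Real.sqrt ∘ (Matrix.posSemidef_conjTranspose_mul_self M).1.eigenvalues) *
      (star (Matrix.posSemidef_conjTranspose_mul_self M).1.eigenvectorUnitary : Matrix n n ℂ)) := by
    have hV2 : star ((Matrix.posSemidef_conjTranspose_mul_self M).1.eigenvectorUnitary : Matrix n n ℂ) *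
        ((Matrix.posSemidef_conjTranspose_mul_self M).1.eigenvectorUnitary : Matrix n n ℂ) = 1 :=
      Matrix.mem_unitaryGroup_iff'.mp (Matrix.posSemidef_conjTranspose_mul_self M).1.eigenvectorUnitary.2
    have hTpsd : Matrix.PosSemidef ((Matrix.posSemidef_conjTranspose_mul_self M).1.eigenvectorUnitary.1 *
      Matrix.diagonal (((↑) : ℝ → ℂ) ∘ Real.sqrt ∘ (Matrix.posSemidef_conjTranspose_mul_self M).1.eigenvalues) *
      (star (Matrix.posSemidef_conjTranspose_mul_self M).1.eigenvectorUnitary : Matrix n n ℂ)) := by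
      apply Matrix.PosSemidef.mul_mul_conjTranspose_same
      exact Matrix.posSemidef_diagonal_iff.mpr fun i => by
        rw [Complex.le_def]; simp [Real.sqrt_nonneg]
    have hdd : Matrix.diagonal (((↑) : ℝ → ℂ) ∘ Real.sqrt ∘ (Matrix.posSemidef_conjTranspose_mul_self M).1.eigenvalues) *
        Matrix.diagonal (((↑) : ℝ → ℂ) ∘ Real.sqrt ∘ (Matrix.posSemidef_conjTranspose_mul_self M).1.eigenvalues) =
        Matrix.diagonal (RCLike.ofReal ∘ (Matrix.posSemidef_conjTranspose_mul_self M).1.eigenvalues) := by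
      rw [Matrix.diagonal_mul_diagonal]
      congr 1
      funext i
      simp only [Function.comp_apply]
      rw [← Complex.ofReal_mul, Real.mul_self_sqrt ((Matrix.posSemidef_conjTranspose_mul_self M).eigenvalues_nonneg i)]
      rfl
    have hTT : ((Matrix.posSemidef_conjTranspose_mul_self M).1.eigenvectorUnitary.1 *
      Matrix.diagonal (((↑) : ℝ → ℂ) ∘ Real.sqrt ∘ (Matrix.posSemidef_conjTranspose_mul_self M).1.eigenvalues) *
      (star (Matrix.posSemidef_conjTranspose_mul_self M).1.eigenvectorUnitary : Matrix n n ℂ)) * ((Matrix.posSemidef_conjTranspose_mul_self M).1.eigenvectorUnitary.1 *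
      Matrix.diagonal (((↑) : ℝ → ℂ) ∘ Real.sqrt ∘ (Matrix.posSemidef_conjTranspose_mul_self M).1.eigenvalues) *
      (star (Matrix.posSemidef_conjTranspose_mul_self M).1.eigenvectorUnitary : Matrix n n ℂ)) = Mᴴ * M := by
      conv_rhs => rw [(Matrix.posSemidef_conjTranspose_mul_self M).1.spectral_theorem, Unitary.conjStarAlgAut_apply]
      simp only [Matrix.mul_assoc]
      rw [← Matrix.mul_assoc (star _) _ _, hV2, Matrix.one_mul, ← Matrix.mul_assoc (Matrix.diagonal _) (Matrix.diagonal _), hdd]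
    exact (CFC.mul_self_eq_mul_self_iff S _ hSpsd.nonneg hTpsd.nonneg).mp
      (by rw [hTT, ← hsq, pow_two])
  rw [trNorm, ← hsqrt, hS]
  rw [Matrix.trace_mul_cycle, hU2, Matrix.one_mul, hD, Matrix.trace_diagonal]
  rw [Complex.re_sum]
  simp
lemma tanh_log_div_four (L : ℝ) (hL : 1 ≤ L) :
    Real.tanh (Real.log L / 4)
      = (Real.exp (Real.log L / 2) - 1) / (Real.exp (Real.log L / 2) + 1) := by
  set y := Real.log L / 4 with hy
  have h2y : Real.log L / 2 = y + y := by rw [hy]; ring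
  rw [h2y, Real.exp_add]
  set e := Real.exp y with he
  have hepos : 0 < e := Real.exp_pos y
  rw [Real.tanh_eq_sinh_div_cosh, Real.sinh_eq, Real.cosh_eq, Real.exp_neg, ← he]
  have h1 : 0 < e * e + 1 := by positivity
  have h2 : 0 < e + e⁻¹ := by positivity
  field_simp

lemma core_ineq {n : Type*} [Fintype n] [DecidableEq n] (a b : n → ℝ) (lam mu : ℝ)
    (ha : ∀ i, 0 ≤ a i) (hb : ∀ i, 0 ≤ b i)
    (hsa : ∑ i, a i = 1) (hsb : ∑ i, b i = 1)
    (hab : ∀ i, a i ≤ lam * b i) (hba : ∀ i, b i ≤ mu * a i) :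
    (1/2) * ∑ i, |a i - b i| ≤ Real.tanh (Real.log (lam * mu) / 4) := by
  have hlam : 1 ≤ lam := by
    have h := Finset.sum_le_sum (fun i _ => hab i) (s := Finset.univ)
    rw [hsa, ← Finset.mul_sum, hsb, mul_one] at h
    exact h
  have hmu : 1 ≤ mu := by
    have h := Finset.sum_le_sum (fun i _ => hba i) (s := Finset.univ)
    rw [hsb, ← Finset.mul_sum, hsa, mul_one] at h
    exact h
  set L := lam * mu with hLdef
  have hL1 : 1 ≤ L := by nlinarith
  set x := Real.exp (Real.log L / 2) with hx
  have hx2 : x * x = L := by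
    rw [hx, ← Real.exp_add]
    rw [show Real.log L / 2 + Real.log L / 2 = Real.log L by ring]
    exact Real.exp_log (by linarith)
  have hx1 : 1 ≤ x := Real.one_le_exp (by
    have h := Real.log_nonneg hL1; linarith)
  rw [tanh_log_div_four L hL1, ← hx]
  -- split sum into positive and negative parts
  set P : Finset n := Finset.univ.filter (fun i => b i ≤ a i) with hP
  set T : ℝ := ∑ i ∈ P, (a i - b i) with hT
  set Tc : ℝ := ∑ i ∈ Pᶜ, (b i - a i) with hTc
  have hzero : ∑ i, (a i - b i) = 0 := by
    rw [Finset.sum_sub_distrib, hsa, hsb]; ring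
  have hsplit : ∑ i, (a i - b i) = T - Tc := by
    rw [← Finset.sum_add_sum_compl P (fun i => a i - b i), hT, hTc]
    have hneg : ∑ i ∈ Pᶜ, (a i - b i) = -∑ i ∈ Pᶜ, (b i - a i) := by
      rw [← Finset.sum_neg_distrib]
      exact Finset.sum_congr rfl (fun i _ => by ring)
    rw [hneg]
    ring
  have hTcT : Tc = T := by linarith [hsplit ▸ hzero]
  have habs : ∑ i, |a i - b i| = T + Tc := by
    rw [← Finset.sum_add_sum_compl P (fun i => |a i - b i|), hT, hTc]
    congr 1
    · apply Finset.sum_congr rfl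
      intro i hi
      rw [hP, Finset.mem_filter] at hi
      exact abs_of_nonneg (by linarith [hi.2])
    · apply Finset.sum_congr rfl
      intro i hi
      rw [hP, Finset.compl_filter, Finset.mem_filter] at hi
      rw [abs_of_neg (by push_neg at hi; linarith [hi.2])]
      ring
  set s : ℝ := ∑ i ∈ P, b i with hs
  set t : ℝ := ∑ i ∈ Pᶜ, a i with ht
  have hs0 : 0 ≤ s := Finset.sum_nonneg fun i _ => hb i
  have ht0 : 0 ≤ t := Finset.sum_nonneg fun i _ => ha i
  have hT0 : 0 ≤ T := by
    apply Finset.sum_nonneg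
    intro i hi
    rw [hP, Finset.mem_filter] at hi
    linarith [hi.2]
  have hTs : T ≤ (lam - 1) * s := by
    rw [hT, hs, Finset.mul_sum]
    apply Finset.sum_le_sum
    intro i _
    have := hab i
    linarith
  have hTt : T ≤ (mu - 1) * t := by
    rw [← hTcT, hTc, ht, Finset.mul_sum]
    apply Finset.sum_le_sum
    intro i _
    have := hba i
    linarith
  have hstT : s + t + T = 1 := by
    have h1 : s + T = ∑ i ∈ P, a i := by
      rw [hs, hT, ← Finset.sum_add_distrib]
      apply Finset.sum_congr rfl
      intro i _; ring
    have h2 : (∑ i ∈ P, a i) + t = 1 := by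
      rw [ht, Finset.sum_add_sum_compl, hsa]
    linarith
  clear_value x T Tc s t
  clear hx hT hTc hs ht hP
  -- key inequality
  have hkey : T * (L - 1) ≤ (lam - 1) * (mu - 1) := by
    have e1 := mul_le_mul_of_nonneg_left hTs (by linarith : (0:ℝ) ≤ mu - 1)
    have e2 := mul_le_mul_of_nonneg_left hTt (by linarith : (0:ℝ) ≤ lam - 1)
    have e3 : (lam - 1) * (mu - 1) * T ≤ (lam - 1) * (mu - 1) * (1 - s - t) := by
      have : T = 1 - s - t := by linarith
      rw [this]
    nlinarith
  have hamgm : 2 * x ≤ lam + mu := by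
    nlinarith [sq_nonneg (lam - mu), sq_nonneg (lam + mu - 2*x), Real.exp_pos (Real.log L / 2)]
  have hkey2 : T * (x * x - 1) ≤ (x - 1) * (x - 1) := by nlinarith
  have hgoal : T ≤ (x - 1) / (x + 1) := by
    rcases eq_or_lt_of_le hx1 with heq | hlt
    · -- x = 1 : lam * mu = 1 so lam = 1, T ≤ 0
      have hL1' : L = 1 := by rw [← hx2, ← heq]; ring
      have hlam1 : lam = 1 := by nlinarith
      have : T ≤ 0 := by
        have hs1 : s ≤ 1 := by linarith
        nlinarith [hTs]
      rw [← heq]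
      simp
      linarith
    · rw [le_div_iff₀ (by linarith)]
      have hx1pos : 0 < x - 1 := by linarith
      nlinarith [hkey2]
  rw [habs, hTcT]
  linarith
lemma psd_diag_re_nonneg {n : Type*} [Fintype n] [DecidableEq n] {X : Matrix n n ℂ}
    (hX : X.PosSemidef) (i : n) : 0 ≤ (X i i).re := by
  have h := hX.diag_nonneg (i := i)
  rw [Complex.le_def] at h
  simpa using h.1


/-- `(1/2)‖ρ₁ − ρ₂‖₁ ≤ tanh(h(ρ₁,ρ₂)/4)` where `h` is the Hilbert projective
metric.  Formulated via arbitrary witnesses `lam, mu` with `ρ₁ ≤ lam·ρ₂` and `ρ₂ ≤ mu·ρ₁`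
(so that `h(ρ₁,ρ₂) = inf log(lam·mu)`); the case where no such witnesses exist is the
trivial `h = ∞` case. -/
theorem stmt14 {n : Type*} [Fintype n] [DecidableEq n]
    (ρ₁ ρ₂ : Matrix n n ℂ) (h₁ : IsState ρ₁) (h₂ : IsState ρ₂)
    (lam mu : ℝ)
    (hl : (((lam : ℝ) : ℂ) • ρ₂ - ρ₁).PosSemidef)
    (hm : (((mu : ℝ) : ℂ) • ρ₁ - ρ₂).PosSemidef) :
    (1 / 2) * trNorm (ρ₁ - ρ₂) ≤ Real.tanh (Real.log (lam * mu) / 4) := by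
  have hΔ : (ρ₁ - ρ₂).IsHermitian := h₁.1.1.sub h₂.1.1
  set U : Matrix n n ℂ := (hΔ.eigenvectorUnitary : Matrix n n ℂ) with hU
  have hU1 : U * star U = 1 := Matrix.mem_unitaryGroup_iff.mp hΔ.eigenvectorUnitary.2
  have hstar : star U = Uᴴ := rfl
  set A₁ : Matrix n n ℂ := star U * ρ₁ * U with hA₁
  set A₂ : Matrix n n ℂ := star U * ρ₂ * U with hA₂
  set a : n → ℝ := fun i => (A₁ i i).re with ha_def
  set b : n → ℝ := fun i => (A₂ i i).re with hb_def
  have hA₁psd : A₁.PosSemidef := by rw [hA₁, hstar]; exact h₁.1.conjTranspose_mul_mul_same U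
  have hA₂psd : A₂.PosSemidef := by rw [hA₂, hstar]; exact h₂.1.conjTranspose_mul_mul_same U
  have ha : ∀ i, 0 ≤ a i := fun i => psd_diag_re_nonneg hA₁psd i
  have hb : ∀ i, 0 ≤ b i := fun i => psd_diag_re_nonneg hA₂psd i
  -- trace conditions
  have trace_conj : ∀ ρ : Matrix n n ℂ, (star U * ρ * U).trace = ρ.trace := by
    intro ρ
    rw [Matrix.trace_mul_cycle, hU1, Matrix.one_mul]
  have hsa : ∑ i, a i = 1 := by
    have h := trace_conj ρ₁
    rw [← hA₁, h₁.2] at h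
    have : (A₁.trace).re = 1 := by rw [h]; simp
    rw [Matrix.trace] at this
    rw [← this, Complex.re_sum]
    rfl
  have hsb : ∑ i, b i = 1 := by
    have h := trace_conj ρ₂
    rw [← hA₂, h₂.2] at h
    have : (A₂.trace).re = 1 := by rw [h]; simp
    rw [Matrix.trace] at this
    rw [← this, Complex.re_sum]
    rfl
  -- pointwise inequalities
  have conj_sub : ∀ (c : ℝ) (σ τ : Matrix n n ℂ),
      star U * ((c : ℂ) • σ - τ) * U = (c : ℂ) • (star U * σ * U) - star U * τ * U := by
    intro c σ τ
    rw [Matrix.mul_sub, Matrix.sub_mul, Matrix.mul_smul, Matrix.smul_mul]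
  have hab : ∀ i, a i ≤ lam * b i := by
    intro i
    have hpsd : (star U * (((lam : ℝ) : ℂ) • ρ₂ - ρ₁) * U).PosSemidef := by
      rw [hstar]; exact hl.conjTranspose_mul_mul_same U
    rw [conj_sub] at hpsd
    have h := psd_diag_re_nonneg hpsd i
    simp only [Matrix.sub_apply, Matrix.smul_apply, Complex.sub_re, smul_eq_mul] at h
    rw [← hA₁, ← hA₂] at h
    have : ((lam : ℂ) * A₂ i i).re = lam * b i := by
      rw [hb_def]; simp [Complex.mul_re]
    rw [this] at h
    rw [ha_def]
    simpa using h
  have hba : ∀ i, b i ≤ mu * a i := by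
    intro i
    have hpsd : (star U * (((mu : ℝ) : ℂ) • ρ₁ - ρ₂) * U).PosSemidef := by
      rw [hstar]; exact hm.conjTranspose_mul_mul_same U
    rw [conj_sub] at hpsd
    have h := psd_diag_re_nonneg hpsd i
    simp only [Matrix.sub_apply, Matrix.smul_apply, Complex.sub_re, smul_eq_mul] at h
    rw [← hA₁, ← hA₂] at h
    have : ((mu : ℂ) * A₁ i i).re = mu * a i := by
      rw [ha_def]; simp [Complex.mul_re]
    rw [this] at h
    rw [hb_def]
    simpa using h
  -- eigenvalues
  have hdiag : star U * (ρ₁ - ρ₂) * U = Matrix.diagonal (RCLike.ofReal ∘ hΔ.eigenvalues) := by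
    have hU2 : star U * U = 1 := Matrix.mem_unitaryGroup_iff'.mp hΔ.eigenvectorUnitary.2
    have hsp := hΔ.spectral_theorem
    rw [Unitary.conjStarAlgAut_apply, ← hU] at hsp
    conv_lhs => rw [hsp]
    simp only [← Matrix.mul_assoc]
    rw [hU2, Matrix.one_mul, Matrix.mul_assoc, hU2, Matrix.mul_one]
  have hd : ∀ i, a i - b i = hΔ.eigenvalues i := by
    intro i
    have hAA : A₁ - A₂ = star U * (ρ₁ - ρ₂) * U := by
      rw [hA₁, hA₂, Matrix.mul_sub, Matrix.sub_mul]
    have h := congrArg (fun X => (X i i).re) (hAA.trans hdiag)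
    simp only [Matrix.sub_apply, Complex.sub_re, Matrix.diagonal_apply_eq,
      Function.comp_apply] at h
    rw [ha_def, hb_def]
    convert h using 2
    simp
  have htr : trNorm (ρ₁ - ρ₂) = ∑ i, |a i - b i| := by
    rw [trNorm_hermitian _ hΔ]
    exact Finset.sum_congr rfl fun i _ => by rw [hd i]
  rw [htr]
  exact core_ineq a b lam mu ha hb hsa hsb hab hba
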